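/- Let C be a triangulated category and let (T, F) be a t-structure in C. Then (Infl T, Infl F) is an inflation factorization system in C. -/

import Mathlib

open CategoryTheory CategoryTheory.Limits CategoryTheory.Pretriangulated

namespace TriangFS

variable {C : Type*} [Category C] [Preadditive C] [HasZeroObject C]
  [HasShift C ℤ] [∀ n : ℤ, (shiftFunctor C n).Additive]
  [Pretriangulated C] [IsTriangulated C]

/-- `Z` is a cone of `f : X ⟶ Y` if it fits in a distinguished triangle
`X ⟶ Y ⟶ Z ⟶ X⟦1⟧`. -/
def IsConeOf {X Y : C} (f : X ⟶ Y) (Z : C) : Prop :=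
  ∃ (g : Y ⟶ Z) (h : Z ⟶ X⟦(1 : ℤ)⟧), Triangle.mk f g h ∈ distTriang C

/-- `l ⊥ r` iff `Hom(C_l, C_r) = 0` and `Hom(C_l, C_r⟦-1⟧) = 0` for cones
`C_l` of `l` and `C_r` of `r`. -/
def ConePerp {X Y Z W : C} (l : X ⟶ Y) (r : Z ⟶ W) : Prop :=
  ∀ (Cl Cr : C), IsConeOf l Cl → IsConeOf r Cr →
    (∀ φ : Cl ⟶ Cr, φ = 0) ∧ (∀ φ : Cl ⟶ Cr⟦(-1 : ℤ)⟧, φ = 0)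

/-- `Infl U`: morphisms admitting a cone in `U`. -/
def Infl (U : Set C) : MorphismProperty C :=
  fun _ _ f => ∃ Z ∈ U, IsConeOf f Z

/-- `Cone L`: objects isomorphic to a cone of some morphism in `L`. -/
def ConeClass (L : MorphismProperty C) : Set C :=
  {Z | ∃ (X Y : C) (f : X ⟶ Y), L f ∧ IsConeOf f Z}

/-- A `t`-structure `(U, V)` in a triangulated category. -/
structure IsTStructure (U V : Set C) : Prop where
  isoClosed_left : ∀ {X Y : C}, (X ≅ Y) → X ∈ U → Y ∈ U
  isoClosed_right : ∀ {X Y : C}, (X ≅ Y) → X ∈ V → Y ∈ V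
  exists_triangle : ∀ X : C, ∃ (U' V' : C) (_ : U' ∈ U) (_ : V' ∈ V)
      (f : U' ⟶ X) (g : X ⟶ V') (h : V' ⟶ U'⟦(1 : ℤ)⟧),
      Triangle.mk f g h ∈ distTriang C
  hom_zero : ∀ {X Y : C}, X ∈ U → Y ∈ V → ∀ f : X ⟶ Y, f = 0
  shift_mem : ∀ {X : C}, X ∈ U → X⟦(1 : ℤ)⟧ ∈ U

/-- An inflation factorization system `(L, R)` in a triangulated category. -/
structure IsInflFactorizationSystem (L R : MorphismProperty C) : Prop where
  factor : ∀ {X Y : C} (f : X ⟶ Y),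
    ∃ (K : C) (l : X ⟶ K) (r : K ⟶ Y), L l ∧ R r ∧ l ≫ r = f
  left_eq : ∀ {X Y : C} (f : X ⟶ Y),
    L f ↔ ∀ {Z W : C} (g : Z ⟶ W), R g → ConePerp f g
  right_eq : ∀ {Z W : C} (g : Z ⟶ W),
    R g ↔ ∀ {X Y : C} (f : X ⟶ Y), L f → ConePerp f g

/-- Any two cones of a morphism are isomorphic. -/
lemma cone_iso {X Y : C} (f : X ⟶ Y) {Z W : C} (hZ : IsConeOf f Z) (hW : IsConeOf f W) :
    Nonempty (Z ≅ W) := by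
  obtain ⟨g, k, hT⟩ := hZ
  obtain ⟨g', k', hT'⟩ := hW
  exact ⟨Triangle.π₃.mapIso
    (isoTriangleOfIso₁₂ _ _ hT hT' (Iso.refl _) (Iso.refl _) (by exact (Category.comp_id _).trans (Category.id_comp _).symm))⟩

/-- `Hom(T, F⟦-1⟧) = 0` for a t-structure. -/
lemma hom_zero_neg {T F : Set C} (h : IsTStructure T F) {A B : C} (hA : A ∈ T) (hB : B ∈ F)
    (φ : A ⟶ B⟦(-1 : ℤ)⟧) : φ = 0 := by
  have hz : φ⟦(1:ℤ)⟧' ≫ (shiftFunctorCompIsoId C (-1 : ℤ) (1 : ℤ) (by norm_num)).hom.app B = 0 :=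
    h.hom_zero (h.shift_mem hA) hB _
  have hz' : φ⟦(1:ℤ)⟧' = 0 := by
    have := hz =≫ (shiftFunctorCompIsoId C (-1 : ℤ) (1 : ℤ) (by norm_num)).inv.app B
    simpa using this
  apply (shiftFunctor C (1:ℤ)).map_injective
  rw [hz', Functor.map_zero]

lemma perp_of_mem {T F : Set C} (h : IsTStructure T F) {X Y Z W : C} {f : X ⟶ Y} {g : Z ⟶ W}
    (hf : Infl T f) (hg : Infl F g) : ConePerp f g := by
  obtain ⟨Zf, hZf, hcf⟩ := hf
  obtain ⟨Zg, hZg, hcg⟩ := hg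
  intro Cl Cr hCl hCr
  obtain ⟨e₁⟩ := cone_iso f hcf hCl
  obtain ⟨e₂⟩ := cone_iso g hcg hCr
  have hCl' : Cl ∈ T := h.isoClosed_left e₁ hZf
  have hCr' : Cr ∈ F := h.isoClosed_right e₂ hZg
  exact ⟨fun φ => h.hom_zero hCl' hCr' φ, fun φ => hom_zero_neg h hCl' hCr' φ⟩

/-- Removing signs on the first two maps of a distinguished triangle. -/
lemma neg₁₂_mem {A B D : C} (a : A ⟶ B) (b : B ⟶ D) (c : D ⟶ A⟦(1:ℤ)⟧)
    (hT : Triangle.mk (-a) (-b) c ∈ distTriang C) : Triangle.mk a b c ∈ distTriang C := by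
  refine isomorphic_distinguished _ hT _ ?_
  exact Triangle.isoMk _ _ (⟨-𝟙 A, -𝟙 A, by simp, by simp⟩ : A ≅ A) (Iso.refl _) (⟨-𝟙 D, -𝟙 D, by simp, by simp⟩ : D ≅ D)
    (by change a ≫ 𝟙 B = (-𝟙 A) ≫ (-a); simp) (by change b ≫ (-𝟙 D) = 𝟙 B ≫ (-b); simp)
    (by change c ≫ (shiftFunctor C (1:ℤ)).map (-𝟙 A) = (-𝟙 D) ≫ c; simp)

lemma factor_lemma {T F : Set C} (h : IsTStructure T F) {X Y : C} (f : X ⟶ Y) :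
    ∃ (K : C) (l : X ⟶ K) (r : K ⟶ Y), Infl T l ∧ Infl F r ∧ l ≫ r = f := by
  obtain ⟨Cf, gf, df, hf⟩ := distinguished_cocone_triangle f
  obtain ⟨U', V', hU', hV', u, v, w, ht⟩ := h.exists_triangle Cf
  obtain ⟨K, r, t, hK⟩ := distinguished_cocone_triangle₁ (gf ≫ v)
  have h₁₂ : Triangle.mk gf df (-f⟦(1:ℤ)⟧') ∈ distTriang C := rot_of_distTriang _ hf
  have h₂₃ : Triangle.mk v w (-u⟦(1:ℤ)⟧') ∈ distTriang C := rot_of_distTriang _ ht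
  have h₁₃ : Triangle.mk (gf ≫ v) t (-r⟦(1:ℤ)⟧') ∈ distTriang C := rot_of_distTriang _ hK
  obtain O := Triangulated.someOctahedron rfl h₁₂ h₂₃ h₁₃
  let l : X ⟶ K := (shiftFunctor C (1:ℤ)).preimage O.m₁
  have hl : l⟦(1:ℤ)⟧' = O.m₁ := (shiftFunctor C (1:ℤ)).map_preimage O.m₁
  have hlr : l ≫ r = f := by
    apply (shiftFunctor C (1:ℤ)).map_injective
    have := O.comm₂
    rw [Preadditive.comp_neg, neg_inj] at this
    rw [Functor.map_comp, hl, this]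
  obtain ⟨Cl, g₂, h₂, hCl⟩ := distinguished_cocone_triangle l
  have h3 : Triangle.mk (-(l⟦(1:ℤ)⟧')) (-(g₂⟦(1:ℤ)⟧')) (-(h₂⟦(1:ℤ)⟧')) ∈ distTriang C :=
    rot_of_distTriang _ (rot_of_distTriang _ (rot_of_distTriang _ hCl))
  have h4 : Triangle.mk (l⟦(1:ℤ)⟧') (g₂⟦(1:ℤ)⟧') (-(h₂⟦(1:ℤ)⟧')) ∈ distTriang C :=
    neg₁₂_mem _ _ _ h3
  rw [hl] at h4
  have e := isoTriangleOfIso₁₂ _ _ h4 O.mem (Iso.refl _) (Iso.refl _)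
    (by exact (Category.comp_id _).trans (Category.id_comp _).symm)
  have e3 : Cl⟦(1:ℤ)⟧ ≅ U'⟦(1:ℤ)⟧ := Triangle.π₃.mapIso e
  have eC : Cl ≅ U' :=
    ((shiftFunctorCompIsoId C (1:ℤ) (-1:ℤ) (by norm_num)).symm.app Cl) ≪≫
      (shiftFunctor C (-1:ℤ)).mapIso e3 ≪≫
      ((shiftFunctorCompIsoId C (1:ℤ) (-1:ℤ) (by norm_num)).app U')
  exact ⟨K, l, r, ⟨Cl, h.isoClosed_left eC.symm hU', g₂, h₂, hCl⟩,
    ⟨V', hV', gf ≫ v, t, hK⟩, hlr⟩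

/-- if `(T, F)` is a `t`-structure in a triangulated category `C`,
then `(Infl T, Infl F)` is an inflation factorization system in `C`. -/
theorem tStructure_infl_isInflFactorizationSystem
    (T F : Set C) (h : IsTStructure T F) :
    IsInflFactorizationSystem (Infl T) (Infl F) := by
  constructor
  · intro X Y f
    exact factor_lemma h f
  · intro X Y f
    constructor
    · intro hf Z W g hg
      exact perp_of_mem h hf hg
    · intro hyp
      obtain ⟨Cf, gf, df, hf⟩ := distinguished_cocone_triangle f
      obtain ⟨U', V', hU', hV', u, v, w, ht⟩ := h.exists_triangle Cf
      obtain ⟨A, f0, h0, hA0⟩ := distinguished_cocone_triangle₁ (𝟙 V')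
      have hg0 : Infl F f0 := ⟨V', hV', 𝟙 V', h0, hA0⟩
      have hperp := hyp f0 hg0 Cf V' ⟨gf, df, hf⟩ ⟨𝟙 V', h0, hA0⟩
      have hv : v = 0 := hperp.1 v
      obtain ⟨ρ, hρ⟩ := Triangle.yoneda_exact₃ _ ht (𝟙 V')
        (by change v ≫ 𝟙 V' = 0; rw [hv, zero_comp])
      have hρ0 : ρ = 0 := h.hom_zero (h.shift_mem hU') hV' ρ
      have hzV : IsZero V' := by
        rw [IsZero.iff_id_eq_zero, hρ, hρ0, comp_zero]; rfl
      haveI : IsIso u := (Triangle.isZero₃_iff_isIso₁ _ ht).1 hzV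
      exact ⟨Cf, h.isoClosed_left (asIso u) hU', gf, df, hf⟩
  · intro Z W g
    constructor
    · intro hg X Y f hf
      exact perp_of_mem h hf hg
    · intro hyp
      obtain ⟨Cg, gg, dg, hgg⟩ := distinguished_cocone_triangle g
      obtain ⟨U', V', hU', hV', u, v, w, ht⟩ := h.exists_triangle Cg
      obtain ⟨A, f0, h0, hA0⟩ := distinguished_cocone_triangle₁ (𝟙 U')
      have hf0 : Infl T f0 := ⟨U', hU', 𝟙 U', h0, hA0⟩
      have hperp := hyp f0 hf0 U' Cg ⟨𝟙 U', h0, hA0⟩ ⟨gg, dg, hgg⟩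
      have hu : u = 0 := hperp.1 u
      obtain ⟨ψ, hψ⟩ := Triangle.coyoneda_exact₂ _ (inv_rot_of_distTriang _ ht) (𝟙 U')
        (by change 𝟙 U' ≫ u = 0; rw [hu, comp_zero])
      have hψ0 : ψ = 0 := hom_zero_neg h hU' hV' ψ
      have hzU : IsZero U' := by
        rw [IsZero.iff_id_eq_zero, hψ, hψ0, zero_comp]; rfl
      haveI : IsIso v := (Triangle.isZero₁_iff_isIso₂ _ ht).1 hzU
      exact ⟨Cg, h.isoClosed_right (asIso v).symm hV', gg, dg, hgg⟩

end TriangFS
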